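/- Let G be an edge-colored graph with coloring c, let u and v be nonadjacent vertices of G with N_G(u) = N_G(v), and let c′ be the symmetrization of c at v to u. Then the number of colors satisfies c′(G) = c(G) − d^s(v) + d^s(u), where d^s(x) denotes the number of colors saturated by x (colors all of whose edges are incident to x) in the coloring c. -/

import Mathlib

open Classical

noncomputable section

/-- A color `a` is saturated by the vertex `x`: some edge has color `a` and every
edge of color `a` is incident to `x`. -/
def Saturates {V : Type*} (G : SimpleGraph V) (c : Sym2 V → ℕ) (x : V) (a : ℕ) : Prop :=
  (∃ e ∈ G.edgeSet, c e = a) ∧ ∀ e ∈ G.edgeSet, c e = a → x ∈ e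

/-- The set of colors saturated by `x`. -/
def satColors {V : Type*} (G : SimpleGraph V) (c : Sym2 V → ℕ) (x : V) : Set ℕ :=
  {a | Saturates G c x a}

/-- The saturated color degree `d^s(x)`. -/
noncomputable def satDegree {V : Type*} (G : SimpleGraph V) (c : Sym2 V → ℕ) (x : V) : ℕ :=
  (satColors G c x).ncard

/-- The symmetrization of the coloring `c` at `v` to `u`: every edge `vx` is recolored
by `c (ux)` if `c (ux)` is not saturated by `u`, and by the fresh color `σ (c (ux))`
otherwise; all other edges keep their colors. -/
noncomputable def symmetrize {V : Type*} (G : SimpleGraph V) (c : Sym2 V → ℕ) (u v : V)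
    (σ : ℕ → ℕ) : Sym2 V → ℕ :=
  fun e =>
    if h : e ∈ G.edgeSet ∧ v ∈ e then
      if Saturates G c u (c s(u, Sym2.Mem.other h.2)) then σ (c s(u, Sym2.Mem.other h.2))
      else c s(u, Sym2.Mem.other h.2)
    else c e

/-- Symmetrizing `c` at `v` to `u` changes the number of colors by
`- d^s(v) + d^s(u)`. -/
theorem ncolors_symmetrize {V : Type*} [Fintype V] (G : SimpleGraph V) (c : Sym2 V → ℕ)
    (u v : V) (huv : ¬ G.Adj u v) (hne : u ≠ v) (hN : G.neighborSet u = G.neighborSet v)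
    (σ : ℕ → ℕ) (hinj : Set.InjOn σ (satColors G c u))
    (hfresh : ∀ a ∈ satColors G c u, σ a ∉ c '' G.edgeSet) :
    (symmetrize G c u v σ '' G.edgeSet).ncard =
      (c '' G.edgeSet).ncard - satDegree G c v + satDegree G c u := by

  classical
  have hAdjuv : ∀ x, G.Adj u x ↔ G.Adj v x := by
    intro x
    have := Set.ext_iff.mp hN x
    simpa [SimpleGraph.mem_neighborSet] using this
  have himg : symmetrize G c u v σ '' G.edgeSet =
      (c '' G.edgeSet \ satColors G c v) ∪ σ '' satColors G c u := by
    ext a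
    constructor
    · rintro ⟨e, he, rfl⟩
      by_cases hv : v ∈ e
      · have hrw : symmetrize G c u v σ e =
            if Saturates G c u (c s(u, (Sym2.Mem.other hv))) then σ (c s(u, (Sym2.Mem.other hv)))
            else c s(u, (Sym2.Mem.other hv)) := dif_pos ⟨he, hv⟩
        set x := (Sym2.Mem.other hv) with hx
        have hex : s(v, x) = e := Sym2.other_spec hv
        have hadjv : G.Adj v x := by
          rw [← hex] at he; exact G.mem_edgeSet.mp he
        have hadju : G.Adj u x := (hAdjuv x).mpr hadjv
        have heu : s(u, x) ∈ G.edgeSet := G.mem_edgeSet.mpr hadju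
        by_cases hsat : Saturates G c u (c s(u, x))
        · right
          rw [hrw, if_pos hsat]
          exact ⟨_, hsat, rfl⟩
        · left
          rw [hrw, if_neg hsat]
          refine ⟨⟨_, heu, rfl⟩, ?_⟩
          intro hA
          have hvm := hA.2 _ heu rfl
          rcases Sym2.mem_iff.mp hvm with h | h
          · exact hne h.symm
          · exact (G.ne_of_adj hadjv).symm h.symm
      · have hrw : symmetrize G c u v σ e = c e := dif_neg (fun h => hv h.2)
        left
        rw [hrw]
        refine ⟨⟨e, he, rfl⟩, ?_⟩
        intro hA
        exact hv (hA.2 e he rfl)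
    · rintro (⟨⟨e, he, rfl⟩, hA⟩ | ⟨b, hb, rfl⟩)
      · have hgood : ∃ e' ∈ G.edgeSet, c e' = c e ∧ v ∉ e' := by
          by_contra hco
          push_neg at hco
          exact hA ⟨⟨e, he, rfl⟩, fun e' he' hc => hco e' he' hc⟩
        obtain ⟨e', he', hc, hv⟩ := hgood
        refine ⟨e', he', ?_⟩
        rw [show symmetrize G c u v σ e' = c e' from dif_neg (fun h => hv h.2), hc]
      · obtain ⟨e₀, he₀, hc₀⟩ := hb.1
        have hu : u ∈ e₀ := hb.2 e₀ he₀ hc₀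
        set x := (Sym2.Mem.other hu) with hx
        have hex : s(u, x) = e₀ := Sym2.other_spec hu
        have hadju : G.Adj u x := by
          rw [← hex] at he₀; exact G.mem_edgeSet.mp he₀
        have hadjv : G.Adj v x := (hAdjuv x).mp hadju
        have hev : s(v, x) ∈ G.edgeSet := G.mem_edgeSet.mpr hadjv
        refine ⟨s(v, x), hev, ?_⟩
        have hvmem : v ∈ s(v, x) := Sym2.mem_mk_left v x
        have hother : (Sym2.Mem.other hvmem) = x := Sym2.congr_right.mp (Sym2.other_spec hvmem)
        have hrw : symmetrize G c u v σ s(v, x) =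
            if Saturates G c u (c s(u, (Sym2.Mem.other hvmem))) then σ (c s(u, (Sym2.Mem.other hvmem)))
            else c s(u, (Sym2.Mem.other hvmem)) := dif_pos ⟨hev, hvmem⟩
        rw [hrw, hother, hex, hc₀]
        exact if_pos hb
  have hSfin : (c '' G.edgeSet).Finite := Set.toFinite _
  have hAS : satColors G c v ⊆ c '' G.edgeSet := by
    rintro a ⟨⟨e, he, hc⟩, -⟩
    exact ⟨e, he, hc⟩
  have hBS : satColors G c u ⊆ c '' G.edgeSet := by
    rintro a ⟨⟨e, he, hc⟩, -⟩
    exact ⟨e, he, hc⟩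
  have hdisj : Disjoint (c '' G.edgeSet \ satColors G c v) (σ '' satColors G c u) := by
    rw [Set.disjoint_left]
    rintro a ⟨haS, -⟩ ⟨b, hb, rfl⟩
    exact hfresh b hb haS
  rw [himg, Set.ncard_union_eq hdisj hSfin.diff ((hSfin.subset hBS).image σ),
    Set.ncard_diff hAS (hSfin.subset hAS), Set.ncard_image_of_injOn hinj]
  rfl
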